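/- Let x_i, y_i ∈ ℂ^N (1 ≤ i ≤ K) be nonzero vectors such that for every subset A ⊆ {1,…,K}, dim span{x_i : i ∈ A} + dim span{y_j : j ∉ A} ≥ N (so the matroid intersection has rank N). Then the separable operator T(Z) = Σ_i x_i y_i† Z y_i x_i† is rank non-decreasing: rank(T(Z)) ≥ rank(Z) for all Z ⪰ 0. -/

import Mathlib

open Matrix
open scoped ComplexOrder

lemma vecMulVec_mulVec' {N : ℕ} (a b v : Fin N → ℂ) :
    (vecMulVec a b) *ᵥ v = (b ⬝ᵥ v) • a := by
  ext j
  simp [vecMulVec, mulVec, dotProduct, Finset.mul_sum, mul_comm, mul_assoc, mul_left_comm]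

lemma sum_mulVec'' {N K : ℕ} (M : Fin K → Matrix (Fin N) (Fin N) ℂ) (v : Fin N → ℂ) :
    (∑ i : Fin K, M i) *ᵥ v = ∑ i : Fin K, M i *ᵥ v := by
  ext j
  simp only [mulVec, dotProduct, Finset.sum_apply, Matrix.sum_apply, Finset.sum_mul]
  exact Finset.sum_comm

theorem edmonds_rado_implies_rank_nondecreasing {N K : ℕ}
    (x y : Fin K → Fin N → ℂ) (hx : ∀ i, x i ≠ 0) (hy : ∀ i, y i ≠ 0)
    (hER : ∀ A : Finset (Fin K),
      N ≤ Module.finrank ℂ (Submodule.span ℂ (x '' A)) +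
            Module.finrank ℂ (Submodule.span ℂ (y '' (↑A)ᶜ)))
    (Z : Matrix (Fin N) (Fin N) ℂ) (hZ : Z.PosSemidef) :
    Z.rank ≤ (∑ i : Fin K,
      vecMulVec (x i) (star (y i)) * Z * vecMulVec (y i) (star (x i))).rank := by
  classical
  set T : Matrix (Fin N) (Fin N) ℂ :=
    ∑ i : Fin K, vecMulVec (x i) (star (y i)) * Z * vecMulVec (y i) (star (x i)) with hT
  set c : Fin K → ℂ := fun i => star (y i) ⬝ᵥ (Z *ᵥ y i) with hc
  set A : Finset (Fin K) := Finset.univ.filter (fun i => c i ≠ 0) with hA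
  have hc_nonneg : ∀ i, 0 ≤ c i := fun i => hZ.dotProduct_mulVec_nonneg (y i)
  -- Step 1: span (y '' Aᶜ) ≤ ker Z
  have hker : Submodule.span ℂ (y '' (↑A)ᶜ) ≤ LinearMap.ker Z.mulVecLin := by
    rw [Submodule.span_le]
    rintro _ ⟨j, hj, rfl⟩
    have hcj : c j = 0 := by
      by_contra h
      exact hj (by simp [hA, h])
    simp only [SetLike.mem_coe, LinearMap.mem_ker, mulVecLin_apply]
    exact (hZ.dotProduct_mulVec_zero_iff (y j)).mp hcj
  -- rank-nullity for Z
  have hrnZ : Z.rank + Module.finrank ℂ (LinearMap.ker Z.mulVecLin) = N := by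
    have := LinearMap.finrank_range_add_finrank_ker Z.mulVecLin
    rwa [Module.finrank_pi, Fintype.card_fin] at this
  have hdY : Module.finrank ℂ (Submodule.span ℂ (y '' (↑A)ᶜ)) ≤
      Module.finrank ℂ (LinearMap.ker Z.mulVecLin) :=
    Submodule.finrank_mono hker
  -- Step 2: the comparison matrix X
  set X : Matrix (Fin K) (Fin N) ℂ :=
    Matrix.of (fun i j => if i ∈ A then star (x i j) else 0) with hX
  have hXrank : X.rank = Module.finrank ℂ (Submodule.span ℂ (x '' (↑A : Set (Fin K)))) := by
    rw [← X.rank_conjTranspose]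
    have : Xᴴ.rank = Module.finrank ℂ (LinearMap.range Xᴴ.mulVecLin) := rfl
    rw [this, Matrix.range_mulVecLin]
    have hspan : Submodule.span ℂ (Set.range Xᴴᵀ) =
        Submodule.span ℂ (x '' (↑A : Set (Fin K))) := by
      apply le_antisymm
      · rw [Submodule.span_le]
        rintro _ ⟨i, rfl⟩
        by_cases hi : i ∈ A
        · have : Xᴴᵀ i = x i := by
            ext j; simp [hX, conjTranspose, hi]
          rw [this]
          exact Submodule.subset_span ⟨i, hi, rfl⟩
        · have : Xᴴᵀ i = 0 := by
            ext j; simp [hX, conjTranspose, hi]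
          rw [this]
          exact Submodule.zero_mem _
      · rw [Submodule.span_le]
        rintro _ ⟨i, hi, rfl⟩
        have : x i = Xᴴᵀ i := by
          ext j; simp [hX, conjTranspose, Finset.mem_coe.mp hi]
        rw [this]
        exact Submodule.subset_span ⟨i, rfl⟩
    rw [show Set.range Xᴴ.col = Set.range Xᴴᵀ from rfl, hspan]
  -- Step 3: ker T ≤ ker X
  have hkerT : LinearMap.ker T.mulVecLin ≤ LinearMap.ker X.mulVecLin := by
    intro v hv
    simp only [LinearMap.mem_ker, mulVecLin_apply] at hv ⊢
    -- expand star v ⬝ᵥ T *ᵥ v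
    have hterm : ∀ i : Fin K,
        star v ⬝ᵥ ((vecMulVec (x i) (star (y i)) * Z * vecMulVec (y i) (star (x i))) *ᵥ v)
          = c i * ((star (x i) ⬝ᵥ v) * star (star (x i) ⬝ᵥ v)) := by
      intro i
      rw [← Matrix.mulVec_mulVec, ← Matrix.mulVec_mulVec,
        vecMulVec_mulVec' (y i) (star (x i)) v, Matrix.mulVec_smul,
        vecMulVec_mulVec', dotProduct_smul, smul_eq_mul, dotProduct_smul, smul_eq_mul]
      have h1 : star v ⬝ᵥ x i = star (star (x i) ⬝ᵥ v) := by
        simp [dotProduct, mul_comm]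
      rw [h1]
      ring
    have hds : star v ⬝ᵥ ((∑ i : Fin K,
        vecMulVec (x i) (star (y i)) * Z * vecMulVec (y i) (star (x i))) *ᵥ v)
        = ∑ i : Fin K, star v ⬝ᵥ
          ((vecMulVec (x i) (star (y i)) * Z * vecMulVec (y i) (star (x i))) *ᵥ v) := by
      rw [sum_mulVec'']
      simp only [dotProduct, Finset.sum_apply, Finset.mul_sum]
      exact Finset.sum_comm
    have hsum : ∑ i : Fin K, c i * ((star (x i) ⬝ᵥ v) * star (star (x i) ⬝ᵥ v)) = 0 := by
      rw [← Finset.sum_congr rfl (fun i _ => hterm i), ← hds, ← hT, hv, dotProduct_zero]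
    have hzero : ∀ i ∈ Finset.univ, c i * ((star (x i) ⬝ᵥ v) * star (star (x i) ⬝ᵥ v)) = 0 :=
      (Finset.sum_eq_zero_iff_of_nonneg (fun i _ =>
        mul_nonneg (hc_nonneg i) (mul_star_self_nonneg _))).mp hsum
    ext i
    simp only [hX, mulVec, Matrix.of_apply, Pi.zero_apply]
    by_cases hi : i ∈ A
    · have hci : c i ≠ 0 := by
        simpa [hA] using hi
      have := hzero i (Finset.mem_univ i)
      have hd : star (x i) ⬝ᵥ v = 0 := by
        rcases mul_eq_zero.mp this with h | h
        · exact absurd h hci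
        · rcases mul_eq_zero.mp h with h' | h'
          · exact h'
          · simpa using congrArg star h'
      simpa [dotProduct, hi] using hd
    · simp [dotProduct, hi]
  -- rank-nullity for T and X
  have hrnT : T.rank + Module.finrank ℂ (LinearMap.ker T.mulVecLin) = N := by
    have := LinearMap.finrank_range_add_finrank_ker T.mulVecLin
    rwa [Module.finrank_pi, Fintype.card_fin] at this
  have hrnX : X.rank + Module.finrank ℂ (LinearMap.ker X.mulVecLin) = N := by
    have := LinearMap.finrank_range_add_finrank_ker X.mulVecLin
    rwa [Module.finrank_pi, Fintype.card_fin] at this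
  have hkk : Module.finrank ℂ (LinearMap.ker T.mulVecLin) ≤
      Module.finrank ℂ (LinearMap.ker X.mulVecLin) := Submodule.finrank_mono hkerT
  have hER' := hER A
  omega
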